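/- arXiv:1607.04005 — 3 statements merged into one kernel-verified Lean document; each statement's English description precedes it below -/
import Mathlib

section
/- Let ξ : [0,1] → ℝ² be a continuous map of finite total variation and let C = ξ([0,1]) be its image. Then the arc length of ξ satisfies ℓ(ξ) ≥ ∫₀^{2π} h_C(θ) dθ − ‖ξ(1) − ξ(0)‖. -/
open Set Real RealInnerProductSpace

noncomputable section

/-- The Euclidean plane ℝ². -/
abbrev Plane := EuclideanSpace ℝ (Fin 2)

/-- Unit vector at angle `θ`. -/
def uvec (θ : ℝ) : Plane := WithLp.toLp 2 ![Real.cos θ, Real.sin θ]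

/-- Support function of a set `C ⊆ ℝ²` at angle `θ`. -/
def supp (C : Set Plane) (θ : ℝ) : ℝ := sSup ((fun x => ⟪x, uvec θ⟫) '' C)

/-- Length of a curve: its total variation on `[0,1]`. -/
def plen (ξ : ℝ → Plane) : ℝ := (eVariationOn ξ (Icc 0 1)).toReal

set_option maxHeartbeats 1000000
lemma inner_uvec (v : Plane) (θ : ℝ) : ⟪v, uvec θ⟫ = v 0 * Real.cos θ + v 1 * Real.sin θ := by
  simp [uvec, PiLp.inner_apply, Fin.sum_univ_two, RCLike.inner_apply]
  ring

lemma cont_inner_uvec (v : Plane) : Continuous fun θ => ⟪v, uvec θ⟫ := by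
  simp only [inner_uvec]; fun_prop

lemma norm_uvec (θ : ℝ) : ‖uvec θ‖ = 1 := by
  have : ‖uvec θ‖^2 = 1 := by
    rw [← real_inner_self_eq_norm_sq, inner_uvec]
    show Real.cos θ * Real.cos θ + Real.sin θ * Real.sin θ = 1
    nlinarith [Real.sin_sq_add_cos_sq θ]
  nlinarith [norm_nonneg (uvec θ)]

lemma integral_inner_uvec (v : Plane) : ∫ θ in (0:ℝ)..(2*π), ⟪v, uvec θ⟫ = 0 := by
  simp only [inner_uvec]
  have h1 : IntervalIntegrable (fun θ => v 0 * Real.cos θ) MeasureTheory.volume 0 (2*π) :=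
    (continuous_const.mul Real.continuous_cos).intervalIntegrable _ _
  have h2 : IntervalIntegrable (fun θ => v 1 * Real.sin θ) MeasureTheory.volume 0 (2*π) :=
    (continuous_const.mul Real.continuous_sin).intervalIntegrable _ _
  rw [intervalIntegral.integral_add h1 h2, intervalIntegral.integral_const_mul,
    intervalIntegral.integral_const_mul, integral_cos, integral_sin]
  simp [Real.sin_two_pi, Real.cos_two_pi]

lemma integral_abs_cos_period (a : ℝ) : ∫ θ in a..(a+2*π), |Real.cos θ| = 4 := by
  have hper : Function.Periodic (fun θ => |Real.cos θ|) (2*π) := fun x => by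
    simp [Real.cos_add_two_pi]
  rw [hper.intervalIntegral_add_eq a 0, zero_add]
  have h1 : ∫ θ in (0:ℝ)..(π/2), |Real.cos θ| = 1 := by
    have he : EqOn (fun θ => |Real.cos θ|) Real.cos (uIcc 0 (π/2)) := by
      intro x hx
      rw [uIcc_of_le (by positivity)] at hx
      exact abs_of_nonneg (Real.cos_nonneg_of_mem_Icc ⟨by linarith [hx.1, pi_pos], hx.2⟩)
    rw [intervalIntegral.integral_congr he, integral_cos]
    simp
  have h2 : ∫ θ in (π/2)..(π/2+π), |Real.cos θ| = 2 := by
    have he : EqOn (fun θ => |Real.cos θ|) (fun x => -Real.cos x) (uIcc (π/2) (π/2+π)) := by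
      intro x hx
      rw [uIcc_of_le (by linarith [pi_pos])] at hx
      refine abs_of_nonpos (Real.cos_nonpos_of_pi_div_two_le_of_le hx.1 ?_)
      linarith [hx.2, pi_pos]
    rw [intervalIntegral.integral_congr he, intervalIntegral.integral_neg, integral_cos,
      Real.sin_add_pi]
    simp [Real.sin_pi_div_two]
    norm_num
  have h3 : ∫ θ in (π/2+π)..(2*π), |Real.cos θ| = 1 := by
    have he : EqOn (fun θ => |Real.cos θ|) Real.cos (uIcc (π/2+π) (2*π)) := by
      intro x hx
      rw [uIcc_of_le (by linarith [pi_pos])] at hx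
      have hc : Real.cos (x - 2*π) = Real.cos x := by
        rw [← Real.cos_add_two_pi (x - 2*π)]; ring_nf
      show |Real.cos x| = Real.cos x
      refine abs_of_nonneg ?_
      rw [← hc]
      refine Real.cos_nonneg_of_mem_Icc ?_
      rw [Set.mem_Icc]
      constructor <;> [linarith [hx.1, pi_pos]; linarith [hx.2, pi_pos]]
    rw [intervalIntegral.integral_congr he, integral_cos, Real.sin_add_pi, Real.sin_two_pi]
    simp
  have i1 : IntervalIntegrable (fun θ => |Real.cos θ|) MeasureTheory.volume 0 (π/2) :=
    (Real.continuous_cos.abs).intervalIntegrable _ _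
  have i2 : IntervalIntegrable (fun θ => |Real.cos θ|) MeasureTheory.volume (π/2) (π/2+π) :=
    (Real.continuous_cos.abs).intervalIntegrable _ _
  have i3 : IntervalIntegrable (fun θ => |Real.cos θ|) MeasureTheory.volume (π/2+π) (2*π) :=
    (Real.continuous_cos.abs).intervalIntegrable _ _
  have e1 : (∫ θ in (0:ℝ)..(π/2), |Real.cos θ|) + ∫ θ in (π/2)..(2*π), |Real.cos θ|
      = ∫ θ in (0:ℝ)..(2*π), |Real.cos θ| :=
    intervalIntegral.integral_add_adjacent_intervals i1 (i2.trans i3)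
  have e2 : (∫ θ in (π/2)..(π/2+π), |Real.cos θ|) + ∫ θ in (π/2+π)..(2*π), |Real.cos θ|
      = ∫ θ in (π/2)..(2*π), |Real.cos θ| :=
    intervalIntegral.integral_add_adjacent_intervals i2 i3
  rw [← e1, ← e2, h1, h2, h3]
  norm_num

lemma norm_plane (v : Plane) : ‖v‖ = Real.sqrt ((v 0)^2 + (v 1)^2) := by
  rw [EuclideanSpace.norm_eq, Fin.sum_univ_two]
  norm_num

lemma integral_abs_inner (v : Plane) :
    ∫ θ in (0:ℝ)..(2*π), |⟪v, uvec θ⟫| = 4 * ‖v‖ := by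
  rcases eq_or_ne v 0 with rfl | hv
  · simp [inner_uvec]
  · set z : ℂ := ⟨v 0, v 1⟩ with hz
    have hz0 : z ≠ 0 := by
      simp only [ne_eq, Complex.ext_iff, Complex.zero_re, Complex.zero_im, hz]
      intro h
      apply hv
      have h0 := h.1; have h1 := h.2
      ext i
      fin_cases i <;> simpa using by assumption
    have habs : ‖z‖ = ‖v‖ := by
      rw [Complex.norm_def, Complex.normSq_apply, norm_plane]
      simp [hz]; ring_nf
    have hre : v 0 = ‖v‖ * Real.cos (Complex.arg z) := by
      rw [← habs, Complex.cos_arg hz0]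
      have : z.re = v 0 := rfl
      rw [this]
      have h0 : ‖z‖ ≠ 0 := by rwa [ne_eq, norm_eq_zero]
      field_simp
    have him : v 1 = ‖v‖ * Real.sin (Complex.arg z) := by
      rw [← habs, Complex.sin_arg]
      have : z.im = v 1 := rfl
      rw [this]
      have : ‖z‖ ≠ 0 := by rwa [ne_eq, norm_eq_zero]
      field_simp
    have key : ∀ θ, ⟪v, uvec θ⟫ = ‖v‖ * Real.cos (θ - Complex.arg z) := by
      intro θ
      rw [inner_uvec, hre, him, Real.cos_sub]; ring
    simp only [key]
    rw [show (fun θ => |‖v‖ * Real.cos (θ - Complex.arg z)|)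
        = fun θ => ‖v‖ * |Real.cos (θ - Complex.arg z)| from funext fun θ => by
      rw [abs_mul, abs_of_nonneg (norm_nonneg v)]]
    rw [intervalIntegral.integral_const_mul]
    rw [intervalIntegral.integral_comp_sub_right (fun x => |Real.cos x|) (Complex.arg z)]
    have := integral_abs_cos_period (0 - Complex.arg z)
    rw [show (0:ℝ) - Complex.arg z + 2*π = 2*π - Complex.arg z by ring] at this
    rw [this]; ring

lemma integral_posPart_inner (v : Plane) :
    ∫ θ in (0:ℝ)..(2*π), max ⟪v, uvec θ⟫ 0 = 2 * ‖v‖ := by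
  have hpt : ∀ θ, max ⟪v, uvec θ⟫ 0 = (⟪v, uvec θ⟫ + |⟪v, uvec θ⟫|)/2 := by
    intro θ; rcases le_total (⟪v, uvec θ⟫ : ℝ) 0 with h | h
    · rw [max_eq_right h, abs_of_nonpos h]; ring
    · rw [max_eq_left h, abs_of_nonneg h]; ring
  simp only [hpt]
  have h1 : IntervalIntegrable (fun θ => (⟪v, uvec θ⟫ : ℝ)) MeasureTheory.volume 0 (2*π) :=
    (cont_inner_uvec v).intervalIntegrable _ _
  have h2 : IntervalIntegrable (fun θ => |(⟪v, uvec θ⟫ : ℝ)|) MeasureTheory.volume 0 (2*π) :=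
    (cont_inner_uvec v).abs.intervalIntegrable _ _
  rw [show (fun θ => ((⟪v, uvec θ⟫ : ℝ) + |⟪v, uvec θ⟫|)/2)
      = fun θ => ((⟪v, uvec θ⟫ : ℝ) + |⟪v, uvec θ⟫|) * (1/2) from funext fun θ => by ring]
  rw [intervalIntegral.integral_mul_const, intervalIntegral.integral_add h1 h2,
    integral_inner_uvec, integral_abs_inner]
  ring

lemma inner_uvec_add_pi (v : Plane) (θ : ℝ) : ⟪v, uvec (θ + π)⟫ = -⟪v, uvec θ⟫ := by
  rw [inner_uvec, inner_uvec, Real.cos_add_pi, Real.sin_add_pi]; ring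

lemma inner_uvec_periodic (v : Plane) : Function.Periodic (fun θ => (⟪v, uvec θ⟫ : ℝ)) (2*π) := by
  intro θ
  simp only [inner_uvec, Real.cos_add_two_pi, Real.sin_add_two_pi]

lemma integral_min_posPart (v w : Plane) :
    ∫ θ in (0:ℝ)..(2*π), min (max ⟪v, uvec θ⟫ 0) (max ⟪w, uvec θ⟫ 0)
      = ‖v‖ + ‖w‖ - ‖v - w‖ := by
  set s : ℝ → ℝ := fun θ => ⟪v, uvec θ⟫ with hs
  set t : ℝ → ℝ := fun θ => ⟪w, uvec θ⟫ with ht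
  have hsc : Continuous s := cont_inner_uvec v
  have htc : Continuous t := cont_inner_uvec w
  set A : ℝ → ℝ := fun θ => |max (s θ) (t θ)| with hA
  set B : ℝ → ℝ := fun θ => |min (s θ) (t θ)| with hB
  have hAc : Continuous A := (hsc.max htc).abs
  have hBc : Continuous B := (hsc.min htc).abs
  -- ∫ B = ∫ A
  have hshift : ∀ θ, B θ = A (θ + π) := by
    intro θ
    simp only [hA, hB, hs, ht, inner_uvec_add_pi]
    rw [max_neg_neg, abs_neg]
  have hAper : Function.Periodic A (2*π) := by
    intro θ
    simp only [hA, hs, ht, inner_uvec, Real.cos_add_two_pi, Real.sin_add_two_pi]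
  have hintAB : ∫ θ in (0:ℝ)..(2*π), B θ = ∫ θ in (0:ℝ)..(2*π), A θ := by
    calc ∫ θ in (0:ℝ)..(2*π), B θ = ∫ θ in (0:ℝ)..(2*π), A (θ + π) := by
          simp only [hshift]
      _ = ∫ θ in (0+π:ℝ)..(2*π+π), A θ := by
          rw [intervalIntegral.integral_comp_add_right A π]
      _ = ∫ θ in (0:ℝ)..(2*π), A θ := by
          have := hAper.intervalIntegral_add_eq π 0
          rw [zero_add] at this
          rw [show (0+π:ℝ) = π by ring, show (2*π+π:ℝ) = π + 2*π by ring, this]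
  -- pointwise identity
  have pp : ∀ x : ℝ, max x 0 = (x + |x|)/2 := by
    intro x
    rcases abs_cases x with ⟨h, h0⟩ | ⟨h, h0⟩
    · rw [max_eq_left h0, h]; ring
    · rw [max_eq_right (le_of_lt h0), h]; ring
  have hpt : ∀ θ, min (max (s θ) 0) (max (t θ) 0)
      = (max (s θ) 0 + max (t θ) 0)/2 - |s θ - t θ|/4 - (A θ - B θ)/4 := by
    intro θ
    simp only [hA, hB]
    rcases le_total (s θ) (t θ) with h | h
    · rw [min_eq_left (max_le_max h le_rfl), max_eq_right h, min_eq_left h,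
        abs_of_nonpos (by linarith : s θ - t θ ≤ 0), pp (s θ), pp (t θ)]
      ring
    · rw [min_eq_right (max_le_max h le_rfl), max_eq_left h, min_eq_right h,
        abs_of_nonneg (by linarith : (0:ℝ) ≤ s θ - t θ), pp (s θ), pp (t θ)]
      ring
  show ∫ θ in (0:ℝ)..(2*π), min (max (s θ) 0) (max (t θ) 0) = _
  simp only [hpt]
  have i1 : IntervalIntegrable (fun θ => (max (s θ) 0 + max (t θ) 0)/2)
      MeasureTheory.volume 0 (2*π) :=
    (((hsc.max continuous_const).add (htc.max continuous_const)).div_const 2).intervalIntegrable _ _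
  have i2 : IntervalIntegrable (fun θ => |s θ - t θ|/4) MeasureTheory.volume 0 (2*π) :=
    (((hsc.sub htc).abs).div_const 4).intervalIntegrable _ _
  have i3 : IntervalIntegrable (fun θ => (A θ - B θ)/4) MeasureTheory.volume 0 (2*π) :=
    (((hAc.sub hBc)).div_const 4).intervalIntegrable _ _
  rw [intervalIntegral.integral_sub (i1.sub i2) i3, intervalIntegral.integral_sub i1 i2]
  have e1 : ∫ θ in (0:ℝ)..(2*π), (max (s θ) 0 + max (t θ) 0)/2 = ‖v‖ + ‖w‖ := by
    rw [show (fun θ => (max (s θ) 0 + max (t θ) 0)/2)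
        = fun θ => (max (s θ) 0 + max (t θ) 0) * (1/2) from funext fun θ => by ring]
    rw [intervalIntegral.integral_mul_const,
      intervalIntegral.integral_add ((hsc.max continuous_const).intervalIntegrable _ _)
        ((htc.max continuous_const).intervalIntegrable _ _)]
    rw [hs, ht]
    rw [integral_posPart_inner v, integral_posPart_inner w]
    ring
  have e2 : ∫ θ in (0:ℝ)..(2*π), |s θ - t θ|/4 = ‖v - w‖ := by
    have hst : ∀ θ, s θ - t θ = ⟪v - w, uvec θ⟫ := by
      intro θ; rw [hs, ht]; simp [inner_sub_left]
    simp only [hst]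
    rw [show (fun θ => |(⟪v - w, uvec θ⟫ : ℝ)|/4)
        = fun θ => |(⟪v - w, uvec θ⟫ : ℝ)| * (1/4) from funext fun θ => by ring]
    rw [intervalIntegral.integral_mul_const, integral_abs_inner]
    ring
  have e3 : ∫ θ in (0:ℝ)..(2*π), (A θ - B θ)/4 = 0 := by
    rw [show (fun θ => (A θ - B θ)/4) = fun θ => (A θ - B θ) * (1/4) from funext fun θ => by ring]
    rw [intervalIntegral.integral_mul_const,
      intervalIntegral.integral_sub (hAc.intervalIntegrable _ _) (hBc.intervalIntegrable _ _),
      hintAB]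
    ring
  rw [e1, e2, e3]
  ring

/-- Running max of inner products along a sequence of points. -/
def Gmax (q : ℕ → Plane) : ℕ → ℝ → ℝ
  | 0 => fun θ => ⟪q 0, uvec θ⟫
  | (n+1) => fun θ => max (Gmax q n θ) ⟪q (n+1), uvec θ⟫

lemma Gmax_cont (q : ℕ → Plane) (n : ℕ) : Continuous (Gmax q n) := by
  induction n with
  | zero => exact cont_inner_uvec _
  | succ n ih => exact ih.max (cont_inner_uvec _)

lemma le_Gmax (q : ℕ → Plane) (n : ℕ) (i : ℕ) (hi : i ≤ n) (θ : ℝ) :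
    ⟪q i, uvec θ⟫ ≤ Gmax q n θ := by
  induction n with
  | zero => rw [Nat.le_zero.mp hi]; exact le_refl _
  | succ n ih =>
    rcases Nat.lt_or_ge i (n+1) with h | h
    · exact le_trans (ih (Nat.lt_succ_iff.mp h)) (le_max_left _ _)
    · rw [le_antisymm hi h]; exact le_max_right _ _

lemma Gmax_abs_le (q : ℕ → Plane) (R : ℝ) (hR : ∀ i, ‖q i‖ ≤ R) (n : ℕ) (θ : ℝ) :
    |Gmax q n θ| ≤ R := by
  have key : ∀ i, |(⟪q i, uvec θ⟫ : ℝ)| ≤ R := by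
    intro i
    calc |(⟪q i, uvec θ⟫ : ℝ)| ≤ ‖q i‖ * ‖uvec θ‖ := abs_real_inner_le_norm _ _
      _ = ‖q i‖ := by rw [norm_uvec]; ring
      _ ≤ R := hR i
  induction n with
  | zero => exact key 0
  | succ n ih =>
    rw [Gmax, abs_le]
    constructor
    · exact le_max_of_le_left (abs_le.mp ih).1
    · exact max_le (abs_le.mp ih).2 (abs_le.mp (key (n+1))).2

lemma Gmax_integral_le (q : ℕ → Plane) (n : ℕ) :
    ∫ θ in (0:ℝ)..(2*π), Gmax q n θ
      ≤ (∑ i ∈ Finset.range n, ‖q (i+1) - q i‖) + ‖q n - q 0‖ := by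
  induction n with
  | zero =>
    simp only [Gmax, Finset.range_zero, Finset.sum_empty, sub_self, norm_zero, zero_add,
      integral_inner_uvec]
    simp [integral_inner_uvec]
  | succ n ih =>
    set P : ℝ → ℝ := fun θ => max (⟪q (n+1), uvec θ⟫ - Gmax q n θ) 0 with hP
    set m : ℝ → ℝ := fun θ =>
      min (max (⟪q (n+1) - q n, uvec θ⟫) 0) (max (⟪q (n+1) - q 0, uvec θ⟫) 0) with hm
    have hPc : Continuous P := ((cont_inner_uvec _).sub (Gmax_cont q n)).max continuous_const
    have hmc : Continuous m :=
      ((cont_inner_uvec _).max continuous_const).min ((cont_inner_uvec _).max continuous_const)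
    have hdecomp : ∀ θ, Gmax q (n+1) θ = Gmax q n θ + P θ := by
      intro θ; show max _ _ = _
      rcases le_total (⟪q (n+1), uvec θ⟫ : ℝ) (Gmax q n θ) with h | h
      · rw [max_eq_left h, hP]
        simp only
        rw [max_eq_right (by linarith : ⟪q (n+1), uvec θ⟫ - Gmax q n θ ≤ 0)]
        ring
      · rw [max_eq_right h, hP]
        simp only
        rw [max_eq_left (by linarith : (0:ℝ) ≤ ⟪q (n+1), uvec θ⟫ - Gmax q n θ)]
        ring
    have hPm : ∀ θ, P θ ≤ m θ := by
      intro θ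
      have e1 : (⟪q (n+1) - q n, uvec θ⟫ : ℝ) = ⟪q (n+1), uvec θ⟫ - ⟪q n, uvec θ⟫ := by
        rw [inner_sub_left]
      have e2 : (⟪q (n+1) - q 0, uvec θ⟫ : ℝ) = ⟪q (n+1), uvec θ⟫ - ⟪q 0, uvec θ⟫ := by
        rw [inner_sub_left]
      refine le_min ?_ ?_
      · rw [e1]
        exact max_le_max (by linarith [le_Gmax q n n le_rfl θ]) le_rfl
      · rw [e2]
        exact max_le_max (by linarith [le_Gmax q n 0 (Nat.zero_le n) θ]) le_rfl
    have hintP : ∫ θ in (0:ℝ)..(2*π), P θ ≤ ∫ θ in (0:ℝ)..(2*π), m θ := by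
      refine intervalIntegral.integral_mono_on (by positivity)
        (hPc.intervalIntegrable _ _) (hmc.intervalIntegrable _ _) ?_
      intro θ _; exact hPm θ
    have hintm : ∫ θ in (0:ℝ)..(2*π), m θ
        = ‖q (n+1) - q n‖ + ‖q (n+1) - q 0‖ - ‖q n - q 0‖ := by
      rw [hm]
      have := integral_min_posPart (q (n+1) - q n) (q (n+1) - q 0)
      rw [show q (n+1) - q n - (q (n+1) - q 0) = -(q n - q 0) by abel, norm_neg] at this
      exact this
    have hsplit : ∫ θ in (0:ℝ)..(2*π), Gmax q (n+1) θ
        = (∫ θ in (0:ℝ)..(2*π), Gmax q n θ) + ∫ θ in (0:ℝ)..(2*π), P θ := by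
      rw [← intervalIntegral.integral_add ((Gmax_cont q n).intervalIntegrable _ _)
        (hPc.intervalIntegrable _ _)]
      exact intervalIntegral.integral_congr fun θ _ => hdecomp θ
    rw [hsplit, Finset.sum_range_succ]
    have htri : ‖q (n+1) - q 0‖ ≤ ‖q (n+1) - q n‖ + ‖q n - q 0‖ := by
      have := norm_sub_le_norm_sub_add_norm_sub (q (n+1)) (q n) (q 0)
      linarith [this]
    linarith [ih, hintP, hintm]

lemma sum_norm_le_plen (ξ : ℝ → Plane) (hbv : BoundedVariationOn ξ (Icc 0 1))
    (n : ℕ) (u : ℕ → ℝ) (hu : Monotone u) (hmem : ∀ i, u i ∈ Icc (0:ℝ) 1) :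
    ∑ i ∈ Finset.range n, ‖ξ (u (i+1)) - ξ (u i)‖ ≤ plen ξ := by
  have h := eVariationOn.sum_le (f := ξ) (n := n) hu hmem
  have hfin : ∀ i ∈ Finset.range n, edist (ξ (u (i+1))) (ξ (u i)) ≠ ⊤ := fun i _ => edist_ne_top _ _
  have e : ∑ i ∈ Finset.range n, ‖ξ (u (i+1)) - ξ (u i)‖
      = (∑ i ∈ Finset.range n, edist (ξ (u (i+1))) (ξ (u i))).toReal := by
    rw [ENNReal.toReal_sum hfin]
    refine Finset.sum_congr rfl fun i _ => ?_
    rw [← dist_eq_norm, dist_edist]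
  rw [e, plen]
  exact ENNReal.toReal_mono hbv h

lemma Gmax_le (q : ℕ → Plane) (n : ℕ) (θ : ℝ) (M : ℝ)
    (h : ∀ i ≤ n, ⟪q i, uvec θ⟫ ≤ M) : Gmax q n θ ≤ M := by
  induction n with
  | zero => exact h 0 le_rfl
  | succ n ih =>
    exact max_le (ih fun i hi => h i (hi.trans (Nat.le_succ n))) (h (n+1) le_rfl)

/-- For a continuous curve `ξ : [0,1] → ℝ²` of finite total variation
with image `C`, the arc length satisfies
`ℓ(ξ) ≥ ∫₀^{2π} h_C(θ) dθ − ‖ξ(1) − ξ(0)‖`. -/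
theorem length_ge_integral_support_sub
    (ξ : ℝ → Plane)
    (hcont : ContinuousOn ξ (Icc 0 1))
    (hbv : BoundedVariationOn ξ (Icc 0 1)) :
    plen ξ ≥ (∫ θ in (0:ℝ)..(2 * π), supp (ξ '' Icc 0 1) θ) - ‖ξ 1 - ξ 0‖ := by
  -- partition points
  set u : ℕ → ℕ → ℝ := fun k i => ((min i k : ℕ) : ℝ) / (k : ℝ) with hu
  set q : ℕ → ℕ → Plane := fun k i => ξ (u k i) with hq
  have humem : ∀ k ≥ 1, ∀ i, u k i ∈ Icc (0:ℝ) 1 := by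
    intro k hk i
    have hk0 : (0:ℝ) < (k:ℝ) := by exact_mod_cast hk
    constructor
    · positivity
    · rw [div_le_one hk0]
      exact_mod_cast Nat.min_le_right i k
  have humono : ∀ k, Monotone (u k) := by
    intro k i j hij
    rcases Nat.eq_zero_or_pos k with rfl | hk
    · simp [hu]
    · have hk0 : (0:ℝ) < (k:ℝ) := by exact_mod_cast hk
      have hmin : ((min i k : ℕ):ℝ) ≤ ((min j k : ℕ):ℝ) := by
        exact_mod_cast min_le_min hij le_rfl
      exact div_le_div_of_nonneg_right hmin hk0.le |>.trans le_rfl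
  have hq0 : ∀ k, q k 0 = ξ 0 := by
    intro k; simp [hq, hu]
  have hqk : ∀ k ≥ 1, q k k = ξ 1 := by
    intro k hk
    have hk0 : ((k:ℕ):ℝ) ≠ 0 := by
      have : k ≠ 0 := by omega
      exact_mod_cast this
    simp [hq, hu, div_self hk0]
  -- uniform bound on the integrals
  have hbound : ∀ k ≥ 1, ∫ θ in (0:ℝ)..(2*π), Gmax (q k) k θ ≤ plen ξ + ‖ξ 1 - ξ 0‖ := by
    intro k hk
    have h1 := Gmax_integral_le (q k) k
    have h2 : ∑ i ∈ Finset.range k, ‖q k (i+1) - q k i‖ ≤ plen ξ :=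
      sum_norm_le_plen ξ hbv k (u k) (humono k) (humem k hk)
    have h3 : ‖q k k - q k 0‖ = ‖ξ 1 - ξ 0‖ := by rw [hqk k hk, hq0 k]
    linarith
  set C : Set Plane := ξ '' Icc 0 1 with hC
  obtain ⟨R, hR⟩ : ∃ R, ∀ t ∈ Icc (0:ℝ) 1, ‖ξ t‖ ≤ R :=
    isCompact_Icc.exists_bound_of_continuousOn hcont
  -- pointwise convergence
  have hlim : ∀ θ : ℝ, Filter.Tendsto (fun k => Gmax (q k) k θ) Filter.atTop (nhds (supp C θ)) := by
    intro θ
    set f : ℝ → ℝ := fun t => ⟪ξ t, uvec θ⟫ with hf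
    have hinner : Continuous fun x : Plane => (⟪x, uvec θ⟫ : ℝ) :=
      continuous_id.inner continuous_const
    have hfc : ContinuousOn f (Icc 0 1) := hinner.comp_continuousOn hcont
    obtain ⟨ts, hts, hmax⟩ :=
      isCompact_Icc.exists_isMaxOn (⟨0, by norm_num⟩ : (Icc (0:ℝ) 1).Nonempty) hfc
    have himg : (fun x : Plane => (⟪x, uvec θ⟫ : ℝ)) '' C = f '' Icc 0 1 := by
      rw [hC, ← Set.image_image (fun x : Plane => (⟪x, uvec θ⟫ : ℝ)) ξ]
    have hbdd : BddAbove (f '' Icc 0 1) := by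
      refine ⟨f ts, ?_⟩
      rintro x ⟨t, ht, rfl⟩
      exact hmax ht
    have hsupp : supp C θ = f ts := by
      rw [supp, himg]
      refine le_antisymm (csSup_le ⟨f 0, Set.mem_image_of_mem f (by norm_num)⟩ ?_)
        (le_csSup hbdd (Set.mem_image_of_mem f hts))
      rintro x ⟨t, ht, rfl⟩
      exact hmax ht
    have hGle : ∀ k ≥ 1, Gmax (q k) k θ ≤ supp C θ := by
      intro k hk
      rw [hsupp]
      exact Gmax_le (q k) k θ (f ts) fun i _ => hmax (humem k hk i)
    rw [Metric.tendsto_atTop]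
    intro ε hε
    obtain ⟨δ, hδ, hδp⟩ := Metric.continuousWithinAt_iff.mp (hcont ts hts) (ε/2) (by positivity)
    refine ⟨max 1 (⌈1/δ⌉₊ + 1), fun k hk => ?_⟩
    have hk1 : 1 ≤ k := le_trans (le_max_left _ _) hk
    have hk0 : (0:ℝ) < (k:ℝ) := by exact_mod_cast hk1
    have hkδ : 1/(k:ℝ) < δ := by
      have h1 : (1:ℝ)/δ ≤ (⌈1/δ⌉₊ : ℝ) := Nat.le_ceil _
      have h2 : (⌈1/δ⌉₊ : ℝ) + 1 ≤ (k:ℝ) := by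
        have := le_trans (le_max_right 1 (⌈1/δ⌉₊ + 1)) hk
        exact_mod_cast this
      have h3 : 1/δ < (k:ℝ) := by linarith
      have h4 := (div_lt_iff₀ hδ).mp h3
      rw [div_lt_iff₀ hk0]
      linarith
    set i : ℕ := ⌊ts * k⌋₊ with hi
    have hts0 : (0:ℝ) ≤ ts := hts.1
    have htsk : ts * (k:ℝ) ≤ (k:ℝ) := mul_le_of_le_one_left hk0.le hts.2
    have hik : i ≤ k := by
      have := Nat.floor_le_floor htsk
      rwa [Nat.floor_natCast] at this
    have hui : u k i = (i:ℝ) / (k:ℝ) := by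
      rw [hu]; simp only [min_eq_left hik]
    have hfl1 : (i:ℝ) ≤ ts * (k:ℝ) := Nat.floor_le (by positivity)
    have hfl2 : ts * (k:ℝ) < (i:ℝ) + 1 := Nat.lt_floor_add_one _
    have hd : dist (u k i) ts < δ := by
      rw [hui, Real.dist_eq, abs_of_nonpos (by rw [sub_nonpos, div_le_iff₀ hk0]; linarith)]
      rw [neg_sub, sub_lt_iff_lt_add]
      calc ts < ((i:ℝ) + 1) / (k:ℝ) := by rw [lt_div_iff₀ hk0]; linarith
        _ = 1/(k:ℝ) + (i:ℝ)/(k:ℝ) := by ring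
        _ < δ + (i:ℝ)/(k:ℝ) := by linarith
    have hdist : dist (ξ (u k i)) (ξ ts) < ε/2 := hδp (humem k hk1 i) hd
    have hfi : f ts - ε/2 ≤ f (u k i) := by
      have : |f (u k i) - f ts| ≤ ‖ξ (u k i) - ξ ts‖ := by
        rw [hf]
        calc |(⟪ξ (u k i), uvec θ⟫ : ℝ) - ⟪ξ ts, uvec θ⟫| = |(⟪ξ (u k i) - ξ ts, uvec θ⟫ : ℝ)| := by
              rw [inner_sub_left]
          _ ≤ ‖ξ (u k i) - ξ ts‖ * ‖uvec θ‖ := abs_real_inner_le_norm _ _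
          _ = ‖ξ (u k i) - ξ ts‖ := by rw [norm_uvec]; ring
      rw [← dist_eq_norm] at this
      have h2 := abs_le.mp this
      linarith [h2.1, hdist]
    have hGge : f (u k i) ≤ Gmax (q k) k θ := le_Gmax (q k) k i hik θ
    rw [hsupp] at hGle
    rw [hsupp, Real.dist_eq, abs_of_nonpos (by linarith [hGle k hk1])]
    linarith [hGle k hk1]
  -- dominated convergence
  have htend : Filter.Tendsto (fun k => ∫ θ in (0:ℝ)..(2*π), Gmax (q k) k θ) Filter.atTop
      (nhds (∫ θ in (0:ℝ)..(2*π), supp C θ)) := by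
    refine intervalIntegral.tendsto_integral_filter_of_dominated_convergence
      (fun _ => R) ?_ ?_ ?_ ?_
    · exact Filter.Eventually.of_forall fun k => (Gmax_cont _ _).aestronglyMeasurable
    · refine (Filter.eventually_ge_atTop 1).mono fun k hk => ?_
      refine MeasureTheory.ae_of_all _ fun θ _ => ?_
      exact Gmax_abs_le (q k) R (fun i => hR _ (humem k hk i)) k θ
    · exact intervalIntegrable_const
    · exact MeasureTheory.ae_of_all _ fun θ _ => hlim θ
  have hfinal : (∫ θ in (0:ℝ)..(2*π), supp C θ) ≤ plen ξ + ‖ξ 1 - ξ 0‖ :=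
    le_of_tendsto htend ((Filter.eventually_ge_atTop 1).mono hbound)
  rw [ge_iff_le, hC] at *
  linarith [hfinal]
end
end

section
/- Let m = (ξ_A, ξ_B) be a compatible net counter-clockwise motion from P₀ to P₁, and let C_A = ξ_A([0,1]) and C_B = ξ_B([0,1]) be the traces. Then for every r ∈ [0,Δ], h_{C_A}(θ₀ + r) + h_{C_B}(θ₀ + r + π) ≥ s. -/
open Set Real RealInnerProductSpace

noncomputable section

/-- A compatible motion of two discs with radius sum `s` from placement `(A₀,B₀)`
to placement `(A₁,B₁)`. -/
structure IsCompatMotion (s : ℝ) (A₀ B₀ A₁ B₁ : Plane) (ξA ξB : ℝ → Plane) : Prop where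
  contA : ContinuousOn ξA (Icc 0 1)
  contB : ContinuousOn ξB (Icc 0 1)
  bvA : BoundedVariationOn ξA (Icc 0 1)
  bvB : BoundedVariationOn ξB (Icc 0 1)
  startA : ξA 0 = A₀
  stopA : ξA 1 = A₁
  startB : ξB 0 = B₀
  stopB : ξB 1 = B₁
  compat : ∀ t ∈ Icc (0:ℝ) 1, s ≤ ‖ξA t - ξB t‖


lemma uvec_apply0 (θ : ℝ) : uvec θ 0 = Real.cos θ := rfl
lemma uvec_apply1 (θ : ℝ) : uvec θ 1 = Real.sin θ := rfl

lemma inner_uvec_self (θ : ℝ) : ⟪uvec θ, uvec θ⟫ = (1:ℝ) := by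
  simp only [PiLp.inner_apply, RCLike.inner_apply, conj_trivial, Fin.sum_univ_two,
    uvec_apply0, uvec_apply1]
  nlinarith [Real.sin_sq_add_cos_sq θ]

lemma uvec_period (θ : ℝ) (k : ℤ) : uvec (θ + 2 * π * k) = uvec θ := by
  have hc : Real.cos (θ + 2 * π * k) = Real.cos θ := by
    rw [mul_comm (2*π) (k:ℝ)]
    exact Real.cos_add_int_mul_two_pi θ k
  have hsn : Real.sin (θ + 2 * π * k) = Real.sin θ := by
    rw [mul_comm (2*π) (k:ℝ)]
    exact Real.sin_add_int_mul_two_pi θ k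
  simp [uvec, hc, hsn]

lemma uvec_add_pi (θ : ℝ) : uvec (θ + π) = - uvec θ := by
  ext i
  fin_cases i <;>
    simp [uvec, Real.cos_add_pi, Real.sin_add_pi]

lemma supp_ge {C : Set Plane} (hC : IsCompact C) {x : Plane} (hx : x ∈ C) (θ : ℝ) :
    ⟪x, uvec θ⟫ ≤ supp C θ := by
  apply le_csSup
  · exact ((hC.image (continuous_id.inner continuous_const)).bddAbove)
  · exact ⟨x, hx, rfl⟩

/-- for a compatible net counter-clockwise motion with traces
`C_A = ξA([0,1])` and `C_B = ξB([0,1])`, for every `r ∈ [0,Δ]`,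
`h_{C_A}(θ₀ + r) + h_{C_B}(θ₀ + r + π) ≥ s`. -/
theorem support_lower_bound_of_netCCW
    (s : ℝ) (hs : 0 < s) (A₀ B₀ A₁ B₁ : Plane) (ξA ξB : ℝ → Plane)
    (hm : IsCompatMotion s A₀ B₀ A₁ B₁ ξA ξB)
    (θm : ℝ → ℝ) (hθcont : ContinuousOn θm (Icc 0 1))
    (hlift : ∀ t ∈ Icc (0:ℝ) 1, ξA t - ξB t = ‖ξA t - ξB t‖ • uvec (θm t))
    (Δ : ℝ) (hΔ0 : 0 ≤ Δ) (hΔlt : Δ < 2 * π)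
    (hΔ : ∃ k : ℤ, θm 1 = θm 0 + Δ + 2 * π * k)
    (hccw : ∀ r ∈ Icc 0 Δ, ∃ t ∈ Icc (0:ℝ) 1, ∃ k : ℤ, θm t = θm 0 + r + 2 * π * k) :
    ∀ r ∈ Icc 0 Δ,
      s ≤ supp (ξA '' Icc 0 1) (θm 0 + r) + supp (ξB '' Icc 0 1) (θm 0 + r + π) := by
  intro r hr
  obtain ⟨t, ht, k, hk⟩ := hccw r hr
  set θ := θm 0 + r with hθ
  have huv : uvec (θm t) = uvec θ := by rw [hk]; exact uvec_period θ k
  have hd : s ≤ ‖ξA t - ξB t‖ := hm.compat t ht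
  have hinner : ⟪ξA t - ξB t, uvec θ⟫ = ‖ξA t - ξB t‖ := by
    conv_lhs => rw [hlift t ht, huv]
    rw [real_inner_smul_left, inner_uvec_self, mul_one]
  have hcA : IsCompact (ξA '' Icc 0 1) := isCompact_Icc.image_of_continuousOn hm.contA
  have hcB : IsCompact (ξB '' Icc 0 1) := isCompact_Icc.image_of_continuousOn hm.contB
  have h1 : ⟪ξA t, uvec θ⟫ ≤ supp (ξA '' Icc 0 1) θ :=
    supp_ge hcA ⟨t, ht, rfl⟩ θ
  have h2 : ⟪ξB t, uvec (θ + π)⟫ ≤ supp (ξB '' Icc 0 1) (θ + π) :=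
    supp_ge hcB ⟨t, ht, rfl⟩ (θ + π)
  have h3 : ⟪ξB t, uvec (θ + π)⟫ = - ⟪ξB t, uvec θ⟫ := by
    rw [uvec_add_pi, inner_neg_right]
  calc s ≤ ‖ξA t - ξB t‖ := hd
    _ = ⟪ξA t, uvec θ⟫ - ⟪ξB t, uvec θ⟫ := by rw [← hinner, inner_sub_left]
    _ = ⟪ξA t, uvec θ⟫ + ⟪ξB t, uvec (θ + π)⟫ := by rw [h3]; ring
    _ ≤ supp (ξA '' Icc 0 1) θ + supp (ξB '' Icc 0 1) (θ + π) := add_le_add h1 h2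
end
end

section
/- (Case 1: straight-line motions) Let P₀ = (A₀,B₀) and P₁ = (A₁,B₁) be compatible placements such that the Euclidean distance from A₀ to the segment [B₀,B₁] is at least s and the Euclidean distance from B₁ to the segment [A₀,A₁] is at least s. Then d(P₀,P₁) = ‖A₁ − A₀‖ + ‖B₁ − B₀‖, attained by the decoupled motion that first translates 𝔹 in a straight line from B₀ to B₁ (with 𝔸 fixed at A₀) and then translates 𝔸 in a straight line from A₀ to A₁ (with 𝔹 fixed at B₁). -/
open Set Real RealInnerProductSpace

noncomputable section

/-- The set of lengths of compatible motions from `(A₀,B₀)` to `(A₁,B₁)`. -/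
def motionLengths (s : ℝ) (A₀ B₀ A₁ B₁ : Plane) : Set ℝ :=
  {L | ∃ ξA ξB : ℝ → Plane, IsCompatMotion s A₀ B₀ A₁ B₁ ξA ξB ∧ L = plen ξA + plen ξB}

/-- The collision-free distance between placements. -/
def cfDist (s : ℝ) (A₀ B₀ A₁ B₁ : Plane) : ℝ := sInf (motionLengths s A₀ B₀ A₁ B₁)

lemma lip_line (P v : Plane) : LipschitzWith ‖v‖₊ (fun u : ℝ => P + u • v) := by
  apply LipschitzWith.of_dist_le_mul
  intro x y
  simp only [dist_eq_norm]
  rw [add_sub_add_left_eq_sub, ← sub_smul, norm_smul]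
  simp [Real.dist_eq, mul_comm]

lemma evar_line (P v : Plane) :
    eVariationOn (fun u : ℝ => P + u • v) (Icc 0 1) = ‖v‖₊ := by
  apply le_antisymm
  · have h := (lip_line P v).lipschitzOnWith (s := univ)
    have hcomp := h.comp_eVariationOn_le (g := id) (s := Icc (0:ℝ) 1) (mapsTo_univ _ _)
    have hid : eVariationOn (id : ℝ → ℝ) (Icc 0 1) ≤ 1 := by
      have := MonotoneOn.eVariationOn_le (f := (id : ℝ → ℝ)) (s := Icc (0:ℝ) 1)
        (monotoneOn_id) (a := 0) (b := 1) (by simp) (by simp)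
      simpa [inter_self] using this
    calc eVariationOn (fun u : ℝ => P + u • v) (Icc 0 1)
        = eVariationOn ((fun u : ℝ => P + u • v) ∘ id) (Icc 0 1) := rfl
      _ ≤ ‖v‖₊ * eVariationOn (id : ℝ → ℝ) (Icc 0 1) := hcomp
      _ ≤ ‖v‖₊ * 1 := mul_le_mul_right hid _
      _ = ‖v‖₊ := mul_one _
  · have := eVariationOn.edist_le (fun u : ℝ => P + u • v)
      (show (1:ℝ) ∈ Icc (0:ℝ) 1 by simp) (show (0:ℝ) ∈ Icc (0:ℝ) 1 by simp)
    simpa [edist_eq_enorm_sub, enorm_eq_nnnorm] using this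

lemma evar_reparam (P v : Plane) (f : ℝ → ℝ) (hf : Monotone f)
    (himg : f '' Icc 0 1 = Icc 0 1) :
    eVariationOn (fun t : ℝ => P + f t • v) (Icc 0 1) = ‖v‖₊ := by
  have : (fun t : ℝ => P + f t • v) = (fun u : ℝ => P + u • v) ∘ f := rfl
  rw [this, eVariationOn.comp_eq_of_monotoneOn _ f (hf.monotoneOn _), himg, evar_line]

lemma img_fB : (fun t : ℝ => min (2 * t) 1) '' Icc 0 1 = Icc 0 1 := by
  ext u
  constructor
  · rintro ⟨t, ⟨ht0, ht1⟩, rfl⟩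
    constructor
    · exact le_min (by linarith) (by norm_num)
    · exact min_le_right _ _
  · rintro ⟨hu0, hu1⟩
    exact ⟨u / 2, ⟨by linarith, by linarith⟩, by show min (2*(u/2)) 1 = u; rw [show 2 * (u / 2) = u by ring]; exact min_eq_left hu1⟩

lemma img_fA : (fun t : ℝ => max (2 * t - 1) 0) '' Icc 0 1 = Icc 0 1 := by
  ext u
  constructor
  · rintro ⟨t, ⟨ht0, ht1⟩, rfl⟩
    constructor
    · exact le_max_right _ _
    · exact max_le (by linarith) (by norm_num)
  · rintro ⟨hu0, hu1⟩
    exact ⟨(u + 1) / 2, ⟨by linarith, by linarith⟩,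
      by show max (2*((u+1)/2)-1) 0 = u; rw [show 2 * ((u + 1) / 2) - 1 = u by ring]; exact max_eq_left hu0⟩

/-- Case 1, straight-line motions: if `A₀` is at distance at
least `s` from the segment `[B₀,B₁]` and `B₁` is at distance at least `s` from
the segment `[A₀,A₁]`, then `d(P₀,P₁) = ‖A₁ − A₀‖ + ‖B₁ − B₀‖`, attained by the
decoupled motion which first translates `𝔹` in a straight line from `B₀` to
`B₁` and then translates `𝔸` in a straight line from `A₀` to `A₁`. -/
theorem cfDist_of_straightLine_case
    (s : ℝ) (hs : 0 < s) (A₀ B₀ A₁ B₁ : Plane)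
    (hP₀ : s ≤ ‖A₀ - B₀‖) (hP₁ : s ≤ ‖A₁ - B₁‖)
    (hA₀ : s ≤ Metric.infDist A₀ (segment ℝ B₀ B₁))
    (hB₁ : s ≤ Metric.infDist B₁ (segment ℝ A₀ A₁)) :
    cfDist s A₀ B₀ A₁ B₁ = ‖A₁ - A₀‖ + ‖B₁ - B₀‖ ∧
    IsCompatMotion s A₀ B₀ A₁ B₁
      (fun t => A₀ + max (2 * t - 1) 0 • (A₁ - A₀))
      (fun t => B₀ + min (2 * t) 1 • (B₁ - B₀)) ∧
    plen (fun t => A₀ + max (2 * t - 1) 0 • (A₁ - A₀)) +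
      plen (fun t => B₀ + min (2 * t) 1 • (B₁ - B₀)) = ‖A₁ - A₀‖ + ‖B₁ - B₀‖ := by
  set ξA : ℝ → Plane := fun t => A₀ + max (2 * t - 1) 0 • (A₁ - A₀) with hξA
  set ξB : ℝ → Plane := fun t => B₀ + min (2 * t) 1 • (B₁ - B₀) with hξB
  have hfA : Monotone (fun t : ℝ => max (2 * t - 1) 0) := by
    intro a b hab
    exact max_le_max (by linarith) le_rfl
  have hfB : Monotone (fun t : ℝ => min (2 * t) 1) := by
    intro a b hab
    exact min_le_min (by linarith) le_rfl
  have hvA : eVariationOn ξA (Icc 0 1) = ‖A₁ - A₀‖₊ := evar_reparam _ _ _ hfA img_fA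
  have hvB : eVariationOn ξB (Icc 0 1) = ‖B₁ - B₀‖₊ := evar_reparam _ _ _ hfB img_fB
  have hplenA : plen ξA = ‖A₁ - A₀‖ := by rw [plen, hvA]; simp
  have hplenB : plen ξB = ‖B₁ - B₀‖ := by rw [plen, hvB]; simp
  have hcm : IsCompatMotion s A₀ B₀ A₁ B₁ ξA ξB := by
    constructor
    · exact Continuous.continuousOn (by fun_prop)
    · exact Continuous.continuousOn (by fun_prop)
    · rw [BoundedVariationOn, hvA]; exact ENNReal.coe_ne_top
    · rw [BoundedVariationOn, hvB]; exact ENNReal.coe_ne_top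
    · simp [hξA]
    · show A₀ + max (2*1-1) 0 • (A₁ - A₀) = A₁; norm_num
    · simp [hξB]
    · show B₀ + min (2*1) 1 • (B₁ - B₀) = B₁; norm_num
    · intro t ⟨ht0, ht1⟩
      rcases le_or_gt t (1/2) with h | h
      · -- ξA t = A₀, ξB t on segment B₀ B₁
        have hAt : ξA t = A₀ := by
          simp [hξA, max_eq_right (by linarith : 2 * t - 1 ≤ 0)]
        have hseg : ξB t ∈ segment ℝ B₀ B₁ := by
          rw [segment_eq_image']
          exact ⟨min (2 * t) 1, ⟨le_min (by linarith) one_pos.le, min_le_right _ _⟩, rfl⟩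
        have := Metric.infDist_le_dist_of_mem (x := A₀) hseg
        rw [hAt, ← dist_eq_norm]
        linarith
      · -- ξB t = B₁, ξA t on segment A₀ A₁
        have hBt : ξB t = B₁ := by
          simp [hξB, min_eq_right (by linarith : (1:ℝ) ≤ 2 * t)]
        have hseg : ξA t ∈ segment ℝ A₀ A₁ := by
          rw [segment_eq_image']
          exact ⟨max (2 * t - 1) 0, ⟨le_max_right _ _, max_le (by linarith) one_pos.le⟩, rfl⟩
        have := Metric.infDist_le_dist_of_mem (x := B₁) hseg
        rw [hBt, ← norm_sub_rev, ← dist_eq_norm]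
        linarith
  have hmem : ‖A₁ - A₀‖ + ‖B₁ - B₀‖ ∈ motionLengths s A₀ B₀ A₁ B₁ :=
    ⟨ξA, ξB, hcm, by rw [hplenA, hplenB]⟩
  have hlb : ∀ L ∈ motionLengths s A₀ B₀ A₁ B₁, ‖A₁ - A₀‖ + ‖B₁ - B₀‖ ≤ L := by
    rintro L ⟨ηA, ηB, hm, rfl⟩
    have h1 : ‖A₁ - A₀‖ ≤ plen ηA := by
      have := eVariationOn.edist_le ηA
        (show (1:ℝ) ∈ Icc (0:ℝ) 1 by simp) (show (0:ℝ) ∈ Icc (0:ℝ) 1 by simp)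
      rw [hm.stopA, hm.startA] at this
      have := ENNReal.toReal_mono hm.bvA this
      simpa [plen, edist_dist, dist_eq_norm] using this
    have h2 : ‖B₁ - B₀‖ ≤ plen ηB := by
      have := eVariationOn.edist_le ηB
        (show (1:ℝ) ∈ Icc (0:ℝ) 1 by simp) (show (0:ℝ) ∈ Icc (0:ℝ) 1 by simp)
      rw [hm.stopB, hm.startB] at this
      have := ENNReal.toReal_mono hm.bvB this
      simpa [plen, edist_dist, dist_eq_norm] using this
    linarith
  refine ⟨le_antisymm (csInf_le ⟨_, hlb⟩ hmem) (le_csInf ⟨_, hmem⟩ hlb), hcm, by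
    rw [hplenA, hplenB]⟩
end
end
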